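/- Let m, s, n, r be positive integers with s < m, n odd, n ≡ 1 (mod m), r ≥ 2, and let j be an integer with 0 ≤ j ≤ ⌊(n^(r-1)-1)/s⌋. Then the sum over k from 0 to n^r - 1 of 2*(q^(s - s n (m j + 1)); q^m)_k * (q^(m - s + s n (m j + 1)); q^m)_k * q^(mk) / ((q^m; q^m)_k^2 * (1 + q^(mk))), as a rational function of q, equals (-1)^(s j + s(n-1)/m). -/

import Mathlib

open Finset

/-- The q-shifted factorial `(x; q)_k = (1 - x)(1 - xq)⋯(1 - xq^(k-1))`. -/
noncomputable def qPoch {K : Type*} [Field K] (x q : K) (k : ℕ) : K :=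
  ∏ i ∈ Finset.range k, (1 - x * q ^ i)

namespace WZaux

variable {K : Type*} [Field K]

lemma qPoch_zero (x q : K) : qPoch x q 0 = 1 := by simp [qPoch]

lemma qPoch_succ (x q : K) (k : ℕ) :
    qPoch x q (k + 1) = qPoch x q k * (1 - x * q ^ k) := Finset.prod_range_succ _ _

lemma qPoch_succ' (x q : K) (k : ℕ) :
    qPoch x q (k + 1) = qPoch (x * q) q k * (1 - x) := by
  unfold qPoch
  rw [Finset.prod_range_succ']
  simp only [pow_zero, mul_one]
  congr 1
  exact Finset.prod_congr rfl fun i _ => by ring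

/-- The summand `F(N,k)`. -/
noncomputable def F (Q : K) (N k : ℕ) : K :=
  2 * qPoch (Q ^ N)⁻¹ Q k * qPoch (Q ^ (N + 1)) Q k * Q ^ k /
    (qPoch Q Q k ^ 2 * (1 + Q ^ k))

/-- The WZ certificate `G(N,k)`. -/
noncomputable def G (Q : K) (N : ℕ) : ℕ → K
  | 0 => 0
  | k + 1 => 2 * qPoch (Q ^ N)⁻¹ Q k * qPoch (Q ^ (N + 1)) Q (k + 1) /
      ((1 - Q ^ (N + 1)) * qPoch Q Q k ^ 2)

lemma G_succ (Q : K) (N k : ℕ) :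
    G Q N (k + 1) = 2 * qPoch (Q ^ N)⁻¹ Q k * qPoch (Q ^ (N + 1)) Q (k + 1) /
      ((1 - Q ^ (N + 1)) * qPoch Q Q k ^ 2) := rfl

section hyp

variable (Q : K) (hQ0 : Q ≠ 0) (hQ1 : ∀ i : ℕ, Q ^ (i + 1) ≠ 1)
  (hQ2 : ∀ i : ℕ, (1 : K) + Q ^ i ≠ 0)

include hQ1 in
lemma one_sub_ne (i : ℕ) : (1 : K) - Q ^ (i + 1) ≠ 0 :=
  sub_ne_zero.mpr (Ne.symm (hQ1 i))

include hQ1 in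
lemma qPochQQ_ne (k : ℕ) : qPoch Q Q k ≠ 0 := by
  induction k with
  | zero => simp [qPoch]
  | succ n ih =>
    rw [qPoch_succ]
    refine mul_ne_zero ih ?_
    rw [show Q * Q ^ n = Q ^ (n + 1) from (pow_succ' Q n).symm]
    exact one_sub_ne Q hQ1 n

include hQ0 in
lemma qPoch_inv_zero (N k : ℕ) (h : N < k) : qPoch (Q ^ N)⁻¹ Q k = 0 := by
  unfold qPoch
  refine Finset.prod_eq_zero (Finset.mem_range.mpr h) ?_
  rw [inv_mul_cancel₀ (pow_ne_zero N hQ0), sub_self]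

include hQ0 in
lemma F_zero (N k : ℕ) (h : N < k) : F Q N k = 0 := by
  simp [F, qPoch_inv_zero Q hQ0 N k h]

include hQ0 in
lemma G_zero (N k : ℕ) (h : N + 1 < k) : G Q N k = 0 := by
  cases k with
  | zero => exact absurd h (by omega)
  | succ c => simp [G_succ, qPoch_inv_zero Q hQ0 N c (by omega)]

include hQ0 hQ1 hQ2 in
lemma wz (N k : ℕ) : F Q (N + 1) k + F Q N k = G Q N (k + 1) - G Q N k := by
  have hden : (1 : K) - Q ^ (N + 1) ≠ 0 := one_sub_ne Q hQ1 N
  cases k with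
  | zero =>
    have h2 : (1 : K) + 1 ≠ 0 := by simpa using hQ2 0
    simp only [F, G_succ, G, qPoch_zero, qPoch_succ, pow_zero, mul_one, one_pow, one_mul]
    field_simp
    ring
  | succ c =>
    have hNpow : Q ^ (N + 1) ≠ 0 := pow_ne_zero _ hQ0
    have hNpow' : Q ^ N ≠ 0 := pow_ne_zero _ hQ0
    have hc1 : (1 : K) - Q ^ (c + 1) ≠ 0 := one_sub_ne Q hQ1 c
    have hKden : (1 : K) - Q * Q ^ c ≠ 0 := by rw [← pow_succ']; exact hc1
    have hKden2 : (1 : K) + Q ^ (c + 1) ≠ 0 := hQ2 (c + 1)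
    have hW : qPoch Q Q c ≠ 0 := qPochQQ_ne Q hQ1 c
    have harg : (Q ^ (N + 1))⁻¹ * Q = (Q ^ N)⁻¹ := by
      rw [pow_succ', mul_inv_rev, mul_assoc, inv_mul_cancel₀ hQ0, mul_one]
    have h1 : qPoch (Q ^ (N + 1))⁻¹ Q (c + 1)
        = qPoch (Q ^ N)⁻¹ Q c * (1 - (Q ^ (N + 1))⁻¹) := by
      rw [qPoch_succ', harg]
    have h5 : qPoch (Q ^ (N + 1 + 1)) Q (c + 1) =
        qPoch (Q ^ (N + 1)) Q (c + 1) * (1 - Q ^ (N + 1) * Q ^ (c + 1)) / (1 - Q ^ (N + 1)) := by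
      rw [eq_div_iff hden, ← qPoch_succ (Q ^ (N + 1)) Q (c + 1),
        qPoch_succ' (Q ^ (N + 1)) Q (c + 1), ← pow_succ]
    have h3 := qPoch_succ (Q ^ (N + 1)) Q (c + 1)
    have h2 := qPoch_succ (Q ^ N)⁻¹ Q c
    have h4 := qPoch_succ Q Q c
    have hDL : (qPoch Q Q c * (1 - Q * Q ^ c)) ^ 2 * (1 + Q ^ (c + 1)) ≠ 0 :=
      mul_ne_zero (pow_ne_zero _ (mul_ne_zero hW hKden)) hKden2
    have hDR1 : (1 - Q ^ (N + 1)) * (qPoch Q Q c * (1 - Q * Q ^ c)) ^ 2 ≠ 0 :=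
      mul_ne_zero hden (pow_ne_zero _ (mul_ne_zero hW hKden))
    have hDR2 : (1 - Q ^ (N + 1)) * qPoch Q Q c ^ 2 ≠ 0 :=
      mul_ne_zero hden (pow_ne_zero _ hW)
    simp only [F, G_succ]
    rw [h1, h5, h2, h3, h4, ← add_div, div_sub_div _ _ hDR1 hDR2,
      div_eq_div_iff hDL (mul_ne_zero hDR1 hDR2)]
    field_simp
    ring

include hQ0 hQ1 hQ2 in
lemma sum_F (N M : ℕ) (h : N + 1 ≤ M) :
    ∑ k ∈ Finset.range M, F Q N k = (-1) ^ N := by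
  induction N generalizing M with
  | zero =>
    have h2 : (1 : K) + 1 ≠ 0 := by simpa using hQ2 0
    rw [Finset.sum_eq_single_of_mem 0 (Finset.mem_range.mpr (by omega))
      (fun k _ hk => F_zero Q hQ0 0 k (by omega))]
    simp only [F, qPoch_zero, pow_zero, mul_one, one_pow, one_mul]
    rw [div_eq_one_iff_eq (by simpa using h2)]
    ring
  | succ N ih =>
    have hsum : ∑ k ∈ Finset.range M, F Q (N + 1) k
        = (∑ k ∈ Finset.range M, (G Q N (k + 1) - G Q N k))
          - ∑ k ∈ Finset.range M, F Q N k := by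
      rw [← Finset.sum_sub_distrib]
      refine Finset.sum_congr rfl fun k _ => ?_
      have hw := wz Q hQ0 hQ1 hQ2 N k
      linear_combination hw
    rw [hsum, Finset.sum_range_sub (G Q N) M, ih M (by omega),
        G_zero Q hQ0 N M (by omega), show G Q N 0 = 0 from rfl]
    ring

end hyp

lemma Xpow_ne_one (d : ℕ) (hd : 0 < d) : (RatFunc.X : RatFunc ℚ) ^ d ≠ 1 := by
  intro h
  have h2 : algebraMap (Polynomial ℚ) (RatFunc ℚ) (Polynomial.X ^ d) =
      algebraMap (Polynomial ℚ) (RatFunc ℚ) 1 := by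
    rw [map_pow, RatFunc.algebraMap_X, map_one, h]
  have h3 := IsFractionRing.injective (Polynomial ℚ) (RatFunc ℚ) h2
  have h4 := congrArg (fun p => Polynomial.coeff p 0) h3
  simp [Polynomial.coeff_X_pow] at h4
  omega

lemma one_add_Xpow_ne_zero (d : ℕ) : (1 : RatFunc ℚ) + RatFunc.X ^ d ≠ 0 := by
  intro h
  have h2 : algebraMap (Polynomial ℚ) (RatFunc ℚ) (1 + Polynomial.X ^ d) = 0 := by
    rw [map_add, map_one, map_pow, RatFunc.algebraMap_X, h]
  have h3 : (1 + Polynomial.X ^ d : Polynomial ℚ) ≠ 0 := by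
    intro hp
    have h4 := congrArg (Polynomial.eval 1) hp
    simp at h4
  exact RatFunc.algebraMap_ne_zero h3 h2

end WZaux

theorem specialized_sum_evaluation (m s n r j : ℕ) (hs : 0 < s) (hsm : s < m) (hn : 0 < n)
    (hodd : Odd n) (hnm : (n : ℤ) ≡ 1 [ZMOD (m : ℤ)]) (hr : 2 ≤ r)
    (hj : j ≤ (n ^ (r - 1) - 1) / s) :
    (∑ k ∈ Finset.range (n ^ r),
      2 * qPoch ((RatFunc.X : RatFunc ℚ) ^ ((s : ℤ) - s * n * (m * j + 1)))
          ((RatFunc.X : RatFunc ℚ) ^ (m : ℤ)) k *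
        qPoch ((RatFunc.X : RatFunc ℚ) ^ ((m : ℤ) - s + s * n * (m * j + 1)))
          ((RatFunc.X : RatFunc ℚ) ^ (m : ℤ)) k *
        (RatFunc.X : RatFunc ℚ) ^ (m * k) /
      (qPoch ((RatFunc.X : RatFunc ℚ) ^ (m : ℤ)) ((RatFunc.X : RatFunc ℚ) ^ (m : ℤ)) k ^ 2 *
        (1 + (RatFunc.X : RatFunc ℚ) ^ (m * k))))
      = (-1) ^ (s * j + s * (n - 1) / m) := by
  have hm : 0 < m := hs.trans hsm
  set Q : RatFunc ℚ := RatFunc.X ^ m with hQdef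
  have hX : (RatFunc.X : RatFunc ℚ) ≠ 0 := RatFunc.X_ne_zero
  have hQ0 : Q ≠ 0 := pow_ne_zero _ hX
  have hQ1 : ∀ i : ℕ, Q ^ (i + 1) ≠ 1 := fun i => by
    rw [hQdef, ← pow_mul]
    exact WZaux.Xpow_ne_one _ (by positivity)
  have hQ2 : ∀ i : ℕ, (1 : RatFunc ℚ) + Q ^ i ≠ 0 := fun i => by
    rw [hQdef, ← pow_mul]
    exact WZaux.one_add_Xpow_ne_zero _
  -- divisibility: m ∣ s * (n - 1)
  have hdvd : (m : ℤ) ∣ (n : ℤ) - 1 := Int.ModEq.dvd hnm.symm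
  have hcast : ((n - 1 : ℕ) : ℤ) = (n : ℤ) - 1 := by
    rw [Nat.cast_sub hn]; norm_num
  have hdvd' : m ∣ n - 1 := by
    rw [← Int.natCast_dvd_natCast, hcast]; exact hdvd
  have hdvd2 : m ∣ s * (n - 1) := Dvd.dvd.mul_left hdvd' s
  -- the truncation point
  set d : ℕ := s * (n - 1) / m with hd
  set N : ℕ := s * n * j + d with hN
  have hqnat : m * d = s * (n - 1) := Nat.mul_div_cancel' hdvd2
  have hq : (m : ℤ) * (d : ℤ) = (s : ℤ) * ((n : ℤ) - 1) := by
    have h0 := congrArg (Nat.cast : ℕ → ℤ) hqnat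
    rw [Nat.cast_mul, Nat.cast_mul, hcast] at h0
    exact h0
  have e1 : (m : ℤ) * (N : ℕ) = (s : ℤ) * n * ((m : ℤ) * j + 1) - s := by
    rw [hN]
    push_cast
    linear_combination hq
  -- exponent conversions
  have cA : (RatFunc.X : RatFunc ℚ) ^ ((s : ℤ) - s * n * (m * j + 1)) = ((Q ^ N)⁻¹) := by
    rw [show (s : ℤ) - (s : ℤ) * n * ((m : ℤ) * j + 1) = -((m * N : ℕ) : ℤ) by
      push_cast; linear_combination e1]
    rw [zpow_neg, zpow_natCast, pow_mul, hQdef]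
  have cB : (RatFunc.X : RatFunc ℚ) ^ ((m : ℤ) - s + s * n * (m * j + 1)) = Q ^ (N + 1) := by
    rw [show (m : ℤ) - s + (s : ℤ) * n * ((m : ℤ) * j + 1) = ((m * (N + 1) : ℕ) : ℤ) by
      push_cast; linear_combination -e1]
    rw [zpow_natCast, pow_mul, hQdef]
  have cQ : (RatFunc.X : RatFunc ℚ) ^ (m : ℤ) = Q := by
    rw [zpow_natCast, hQdef]
  have cK : ∀ k : ℕ, (RatFunc.X : RatFunc ℚ) ^ (m * k) = Q ^ k := fun k => by
    rw [pow_mul, hQdef]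
  -- bound : N + 1 ≤ n ^ r
  have h1pow : 1 ≤ n ^ (r - 1) := Nat.one_le_pow _ _ hn
  have hjs : j * s ≤ n ^ (r - 1) - 1 := (Nat.le_div_iff_mul_le hs).mp hj
  have hs1 : s * j + 1 ≤ n ^ (r - 1) := by
    rw [mul_comm]
    exact (Nat.le_sub_iff_add_le h1pow).mp hjs
  have hd2 : d ≤ n - 1 := by
    rw [hd]
    calc s * (n - 1) / m ≤ m * (n - 1) / m :=
          Nat.div_le_div_right (Nat.mul_le_mul_right _ hsm.le)
      _ = n - 1 := Nat.mul_div_cancel_left _ hm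
  have hp : n ^ r = n * n ^ (r - 1) := by
    rw [← pow_succ']
    congr 1
    omega
  have hbound : N + 1 ≤ n ^ r := by
    have step2 : s * n * j = n * (s * j) := by ring
    have step3 : n * (s * j) + n ≤ n * n ^ (r - 1) := by
      calc n * (s * j) + n = n * (s * j + 1) := by ring
        _ ≤ n * n ^ (r - 1) := Nat.mul_le_mul_left _ hs1
    rw [hN, step2]
    omega
  -- convert the sum
  have hterm : ∀ k ∈ Finset.range (n ^ r),
      2 * qPoch ((RatFunc.X : RatFunc ℚ) ^ ((s : ℤ) - s * n * (m * j + 1)))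
          ((RatFunc.X : RatFunc ℚ) ^ (m : ℤ)) k *
        qPoch ((RatFunc.X : RatFunc ℚ) ^ ((m : ℤ) - s + s * n * (m * j + 1)))
          ((RatFunc.X : RatFunc ℚ) ^ (m : ℤ)) k *
        (RatFunc.X : RatFunc ℚ) ^ (m * k) /
      (qPoch ((RatFunc.X : RatFunc ℚ) ^ (m : ℤ)) ((RatFunc.X : RatFunc ℚ) ^ (m : ℤ)) k ^ 2 *
        (1 + (RatFunc.X : RatFunc ℚ) ^ (m * k))) = WZaux.F Q N k := fun k _ => by
    rw [cA, cB, cQ, cK]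
    rfl
  rw [Finset.sum_congr rfl hterm, WZaux.sum_F Q hQ0 hQ1 hQ2 N (n ^ r) hbound]
  -- parity
  obtain ⟨t, ht⟩ := hodd
  have hpar : N = 2 * (s * t * j) + (s * j + d) := by
    have hx : s * n * j = 2 * (s * t * j) + s * j := by rw [ht]; ring
    rw [hN, hx, add_assoc]
  rw [hpar, pow_add, pow_mul]
  norm_num
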